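/- arXiv:1109.6053 — 2 statements merged into one kernel-verified Lean document; each statement's English description precedes it below -/
import Mathlib

section
/- Let q be a prime power. The group F_{q^3}^× / F_q^×, acting by multiplication on the set of one-dimensional F_q-subspaces of F_{q^3} (viewed as a 3-dimensional F_q-vector space, i.e. the points of the projective plane over F_q), acts simply transitively: for any two one-dimensional subspaces L₁, L₂ there is a unique coset α·F_q^× with α·L₁ = L₂. -/
open Module Submodule

lemma singer_aux_span {K F : Type*} [Field K] [Field F] [Fintype F] [Algebra K F]
    (L : Submodule K F) (h : Module.finrank K L = 1) :
    ∃ x : F, x ≠ 0 ∧ L = span K {x} := by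
  have hFD : FiniteDimensional K F := Module.Finite.of_finite
  have hpos : 0 < finrank K L := by omega
  rw [finrank_pos_iff] at hpos
  obtain ⟨⟨x, hxL⟩, hx0⟩ := exists_ne (0 : L)
  have hx : x ≠ 0 := fun h => hx0 (Subtype.ext h)
  refine ⟨x, hx, ?_⟩
  have hle : span K {x} ≤ L := by simpa [span_le] using hxL
  refine (eq_of_le_of_finrank_le hle ?_).symm
  rw [h, finrank_span_singleton hx]

lemma singer_aux_map {K F : Type*} [Field K] [Field F] [Algebra K F]
    (a x : F) : Submodule.map (LinearMap.mulLeft K a) (span K {x}) = span K {a * x} := by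
  rw [Submodule.map_span, Set.image_singleton]
  rfl

/-- The Singer group `Fˣ/Kˣ` acts simply transitively on the points of the
projective plane over `K`, i.e. on the one-dimensional `K`-subspaces of a
cubic extension `F` of `K`. -/
theorem singer_simply_transitive (K F : Type*) [Field K] [Field F] [Fintype K]
    [Fintype F] [Algebra K F] (h3 : Module.finrank K F = 3)
    (L₁ L₂ : Submodule K F) (h1 : Module.finrank K L₁ = 1)
    (h2 : Module.finrank K L₂ = 1) :
    ∃! γ : Fˣ ⧸ (Units.map (algebraMap K F).toMonoidHom).range,
      ∃ α : Fˣ, QuotientGroup.mk α = γ ∧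
        Submodule.map (LinearMap.mulLeft K (α : F)) L₁ = L₂ := by
  obtain ⟨x, hx, rfl⟩ := singer_aux_span L₁ h1
  obtain ⟨y, hy, rfl⟩ := singer_aux_span L₂ h2
  set a : F := y * x⁻¹ with ha
  have haz : a ≠ 0 := mul_ne_zero hy (inv_ne_zero hx)
  have hax : a * x = y := by rw [ha, mul_assoc, inv_mul_cancel₀ hx, mul_one]
  refine ⟨QuotientGroup.mk (Units.mk0 a haz), ⟨Units.mk0 a haz, rfl, ?_⟩, ?_⟩
  · rw [singer_aux_map, Units.val_mk0, hax]
  · rintro γ ⟨β, rfl, hβ⟩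
    rw [singer_aux_map] at hβ
    -- β * x ∈ span {y}
    have hmem : (β : F) * x ∈ span K {y} := by
      rw [← hβ]; exact mem_span_singleton_self _
    obtain ⟨c, hc⟩ := mem_span_singleton.1 hmem
    have hc0 : c ≠ 0 := by
      rintro rfl
      simp only [zero_smul] at hc
      exact (mul_ne_zero β.ne_zero hx) hc.symm
    -- β = c • a as elements of F
    have key : (β : F) = algebraMap K F c * a := by
      have : (β : F) * x = (algebraMap K F c * a) * x := by
        rw [mul_assoc, hax, ← hc, Algebra.smul_def]
      exact mul_right_cancel₀ hx this
    refine QuotientGroup.eq.mpr ⟨(Units.mk0 c hc0)⁻¹, Units.ext ?_⟩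
    simp only [map_inv, Units.coe_map, MonoidHom.coe_coe, Units.val_mk0, Units.val_mul,
      Units.val_inv_eq_inv_val]
    rw [key]
    have hc0' : algebraMap K F c ≠ 0 := by
      simpa using (algebraMap K F).injective.ne hc0
    field_simp
    exact div_self hc0'
end

section
/- In the group G = (ZMod 7) × (ZMod 7), set g₁ = (1,0), g₂ = (0,1), g₃ = −g₁−g₂, and h₁ = (1,2), h₂ = (1,3), h₃ = −h₁−h₂. Then: (a) {g₁, g₂} generates G and {h₁, h₂} generates G; (b) g₁+g₂+g₃ = 0 and h₁+h₂+h₃ = 0; (c) the union of the cyclic subgroups generated by g₁, g₂, g₃ intersects the union of the cyclic subgroups generated by h₁, h₂, h₃ only in 0. (Thus (T₁, T₂) with T₁ = [g₁,g₂,g₃], T₂ = [h₁,h₂,h₃] is an unmixed ramification (Beauville) structure of type ([7,7,7],[7,7,7]) on (ZMod 7)².) -/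
private lemma mem_zmul_aux (g x : ZMod 7 × ZMod 7)
    (hx : x ∈ AddSubgroup.zmultiples g) : ∃ c : ZMod 7, x = c • g := by
  obtain ⟨n, rfl⟩ := hx
  exact ⟨(n : ZMod 7), (Int.cast_smul_eq_zsmul (ZMod 7) n g).symm⟩

/-- An unmixed ramification (Beauville) structure of type ([7,7,7],[7,7,7]) on
`(ZMod 7)²`: both triples are spherical systems of generators and the unions of
the cyclic subgroups they generate meet only in `0`. -/
theorem beauville_structure_Z7sq :
    let G := ZMod 7 × ZMod 7
    let g₁ : G := (1, 0)
    let g₂ : G := (0, 1)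
    let g₃ : G := -g₁ - g₂
    let h₁ : G := (1, 2)
    let h₂ : G := (1, 3)
    let h₃ : G := -h₁ - h₂
    (AddSubgroup.closure {g₁, g₂} = (⊤ : AddSubgroup G)) ∧
    (AddSubgroup.closure {h₁, h₂} = (⊤ : AddSubgroup G)) ∧
    (g₁ + g₂ + g₃ = 0) ∧ (h₁ + h₂ + h₃ = 0) ∧
    ((AddSubgroup.zmultiples g₁ ∪ AddSubgroup.zmultiples g₂ ∪
        AddSubgroup.zmultiples g₃ : Set G) ∩
      (AddSubgroup.zmultiples h₁ ∪ AddSubgroup.zmultiples h₂ ∪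
        AddSubgroup.zmultiples h₃ : Set G) ⊆ {0}) := by
  intro G g₁ g₂ g₃ h₁ h₂ h₃
  have key : ∀ x : G,
      ((∃ c : ZMod 7, x = c • g₁) ∨ (∃ c : ZMod 7, x = c • g₂) ∨
        (∃ c : ZMod 7, x = c • g₃)) →
      ((∃ c : ZMod 7, x = c • h₁) ∨ (∃ c : ZMod 7, x = c • h₂) ∨
        (∃ c : ZMod 7, x = c • h₃)) → x = 0 := by decide
  refine ⟨?_, ?_, by decide, by decide, ?_⟩
  · rw [eq_top_iff]
    rintro ⟨a, b⟩ -
    have h1 : g₁ ∈ AddSubgroup.closure {g₁, g₂} :=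
      AddSubgroup.subset_closure (by left; rfl)
    have h2 : g₂ ∈ AddSubgroup.closure {g₁, g₂} :=
      AddSubgroup.subset_closure (by right; rfl)
    have : ((a, b) : G) = a.val • g₁ + b.val • g₂ := by
      show ((a, b) : G) = (a.val • (1:ZMod 7), a.val • (0:ZMod 7))
        + (b.val • (0:ZMod 7), b.val • (1:ZMod 7))
      simp [nsmul_eq_mul, ZMod.natCast_val, ZMod.cast_id]
    rw [this]
    exact add_mem (nsmul_mem h1 _) (nsmul_mem h2 _)
  · rw [eq_top_iff]
    rintro ⟨a, b⟩ -
    set S := AddSubgroup.closure ({h₁, h₂} : Set G)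
    have h1 : h₁ ∈ S := AddSubgroup.subset_closure (by left; rfl)
    have h2 : h₂ ∈ S := AddSubgroup.subset_closure (by right; rfl)
    have e1 : ((1, 0) : G) ∈ S := by
      have : ((1, 0) : G) = (3 : ℤ) • h₁ - (2 : ℤ) • h₂ := by decide
      rw [this]; exact sub_mem (zsmul_mem h1 _) (zsmul_mem h2 _)
    have e2 : ((0, 1) : G) ∈ S := by
      have : ((0, 1) : G) = h₂ - h₁ := by decide
      rw [this]; exact sub_mem h2 h1
    have : ((a, b) : G) = a.val • ((1, 0) : G) + b.val • ((0, 1) : G) := by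
      show ((a, b) : G) = (a.val • (1:ZMod 7), a.val • (0:ZMod 7))
        + (b.val • (0:ZMod 7), b.val • (1:ZMod 7))
      simp [nsmul_eq_mul, ZMod.natCast_val, ZMod.cast_id]
    rw [this]
    exact add_mem (nsmul_mem e1 _) (nsmul_mem e2 _)
  · rintro x ⟨hg, hh⟩
    refine key x ?_ ?_
    · rcases hg with (h | h) | h
      · exact Or.inl (mem_zmul_aux _ _ h)
      · exact Or.inr (Or.inl (mem_zmul_aux _ _ h))
      · exact Or.inr (Or.inr (mem_zmul_aux _ _ h))
    · rcases hh with (h | h) | h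
      · exact Or.inl (mem_zmul_aux _ _ h)
      · exact Or.inr (Or.inl (mem_zmul_aux _ _ h))
      · exact Or.inr (Or.inr (mem_zmul_aux _ _ h))
end
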